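/- Let n ∈ ℕ (n ≥ 1) and let I be a proper open subinterval of ℝ. If f : I → ℝ is Jensen convex of order n, then there exists a continuous function g : I → ℝ that is convex of order n on I and satisfies g(x) = f(x) for every rational x ∈ I. -/

import Mathlib

open Finset Filter Topology

/-- The difference operator `Δ_h`. -/
noncomputable def dOp (h : ℝ) (f : ℝ → ℝ) : ℝ → ℝ := fun x => f (x + h) - f x

/-- Iterated difference operator `Δ_{h_1} ⋯ Δ_{h_k}` for a list `[h_1, …, h_k]`. -/
noncomputable def dList (l : List ℝ) (f : ℝ → ℝ) : ℝ → ℝ := l.foldr dOp f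

/-- The divided difference `[x_0, …, x_m; f]`. -/
noncomputable def divDiff (m : ℕ) (x : Fin (m + 1) → ℝ) (f : ℝ → ℝ) : ℝ :=
  ∑ i, f (x i) / ∏ j ∈ Finset.univ.erase i, (x i - x j)

/-- `I` is a proper open subinterval of the real line. -/
def ProperOpenInterval (I : Set ℝ) : Prop :=
  IsOpen I ∧ I.OrdConnected ∧ I.Nonempty ∧ I ≠ Set.univ

/-- A real number which is rational. -/
def IsRatR (x : ℝ) : Prop := ∃ q : ℚ, (q : ℝ) = x

/-- `f` is Wright convex of order `n` on `I`. -/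
def WrightConvexOrder (n : ℕ) (I : Set ℝ) (f : ℝ → ℝ) : Prop :=
  ∀ l : List ℝ, l.length = n + 1 → (∀ h ∈ l, 0 < h) →
    ∀ x : ℝ, x ∈ I → x + l.sum ∈ I → 0 ≤ dList l f x

/-- `f` is Jensen convex of order `n` on `I`. -/
def JensenConvexOrder (n : ℕ) (I : Set ℝ) (f : ℝ → ℝ) : Prop :=
  ∀ h : ℝ, 0 < h → ∀ x : ℝ, x ∈ I → x + (n + 1) * h ∈ I → 0 ≤ (dOp h)^[n + 1] f x

/-- `f` is convex of order `n` on `I`. -/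
def ConvexOrder (n : ℕ) (I : Set ℝ) (f : ℝ → ℝ) : Prop :=
  ∀ x : Fin (n + 2) → ℝ, Function.Injective x → (∀ i, x i ∈ I) →
    0 ≤ divDiff (n + 1) x f

noncomputable def ddiff (S : Finset ℝ) (f : ℝ → ℝ) : ℝ :=
  ∑ t ∈ S, f t / ∏ s ∈ S.erase t, (t - s)

lemma prod_sub_ne_zero (S : Finset ℝ) (t : ℝ) : ∏ s ∈ S.erase t, (t - s) ≠ 0 :=
  Finset.prod_ne_zero_iff.2 fun s hs => sub_ne_zero.2 (Finset.ne_of_mem_erase hs).symm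

lemma ddiff_threeTerm (T : Finset ℝ) (f : ℝ → ℝ) {u v : ℝ} (hu : u ∈ T) (hv : v ∈ T)
    (huv : u ≠ v) :
    ddiff (T.erase u) f - ddiff (T.erase v) f = (v - u) * ddiff T f := by
  classical
  have hvu : v ∈ T.erase u := Finset.mem_erase.2 ⟨huv.symm, hv⟩
  have huv' : u ∈ T.erase v := Finset.mem_erase.2 ⟨huv, hu⟩
  have hcomm : (T.erase v).erase u = (T.erase u).erase v := Finset.erase_right_comm
  have hne : v - u ≠ 0 := sub_ne_zero.2 huv.symm
  have hne' : u - v ≠ 0 := sub_ne_zero.2 huv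
  unfold ddiff
  rw [← Finset.add_sum_erase _ _ hvu, ← Finset.add_sum_erase _ _ huv',
      ← Finset.add_sum_erase _ _ hu, ← Finset.add_sum_erase _ _ hvu, hcomm]
  have h1 : f v / ∏ s ∈ (T.erase u).erase v, (v - s)
      = (v - u) * (f v / ∏ s ∈ T.erase v, (v - s)) := by
    rw [← Finset.mul_prod_erase _ _ huv', hcomm]
    field_simp
  have h2 : -(f u / ∏ s ∈ (T.erase u).erase v, (u - s))
      = (v - u) * (f u / ∏ s ∈ T.erase u, (u - s)) := by
    rw [← Finset.mul_prod_erase _ _ hvu]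
    have hP := prod_sub_ne_zero (T.erase v) u
    rw [hcomm] at hP
    field_simp
    ring
  have h3 : ∀ t ∈ (T.erase u).erase v,
      f t / ∏ s ∈ (T.erase u).erase t, (t - s) - f t / ∏ s ∈ (T.erase v).erase t, (t - s)
      = (v - u) * (f t / ∏ s ∈ T.erase t, (t - s)) := by
    intro t ht
    have htv : t ≠ v := Finset.ne_of_mem_erase ht
    have htu : t ≠ u := Finset.ne_of_mem_erase (Finset.mem_of_mem_erase ht)
    have htT : t ∈ T := Finset.mem_of_mem_erase (Finset.mem_of_mem_erase ht)
    have hv1 : v ∈ (T.erase u).erase t :=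
      Finset.mem_erase.2 ⟨htv.symm, hvu⟩
    have hu1 : u ∈ (T.erase v).erase t :=
      Finset.mem_erase.2 ⟨htu.symm, huv'⟩
    have hu2 : u ∈ T.erase t := Finset.mem_erase.2 ⟨htu.symm, hu⟩
    have hv2 : v ∈ (T.erase t).erase u := Finset.mem_erase.2 ⟨huv.symm, Finset.mem_erase.2 ⟨htv.symm, hv⟩⟩
    have s1 : ((T.erase u).erase t).erase v = ((T.erase u).erase v).erase t := by
      ext x; simp only [Finset.mem_erase]; tauto
    have s2 : ((T.erase v).erase t).erase u = ((T.erase u).erase v).erase t := by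
      ext x; simp only [Finset.mem_erase]; tauto
    have s3 : ((T.erase t).erase u).erase v = ((T.erase u).erase v).erase t := by
      ext x; simp only [Finset.mem_erase]; tauto
    have e1 : ∏ s ∈ (T.erase u).erase t, (t - s)
        = (t - v) * ∏ s ∈ ((T.erase u).erase v).erase t, (t - s) := by
      rw [← Finset.mul_prod_erase _ _ hv1, s1]
    have e2 : ∏ s ∈ (T.erase v).erase t, (t - s)
        = (t - u) * ∏ s ∈ ((T.erase u).erase v).erase t, (t - s) := by
      rw [← Finset.mul_prod_erase _ _ hu1, s2]
    have e3 : ∏ s ∈ T.erase t, (t - s)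
        = (t - u) * ((t - v) * ∏ s ∈ ((T.erase u).erase v).erase t, (t - s)) := by
      rw [← Finset.mul_prod_erase _ _ hu2, ← Finset.mul_prod_erase _ _ hv2, s3]
    rw [e1, e2, e3]
    have hA := prod_sub_ne_zero ((T.erase u).erase v) t
    have h4 : t - u ≠ 0 := sub_ne_zero.2 htu
    have h5 : t - v ≠ 0 := sub_ne_zero.2 htv
    field_simp
    ring
  have hsum : ∑ t ∈ (T.erase u).erase v, f t / ∏ s ∈ (T.erase u).erase t, (t - s)
      - ∑ t ∈ (T.erase u).erase v, f t / ∏ s ∈ (T.erase v).erase t, (t - s)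
      = (v - u) * ∑ t ∈ (T.erase u).erase v, f t / ∏ s ∈ T.erase t, (t - s) := by
    rw [← Finset.sum_sub_distrib, Finset.mul_sum]
    exact Finset.sum_congr rfl h3
  linear_combination h1 + h2 + hsum


lemma ddiff_split (T : Finset ℝ) (f : ℝ → ℝ) {u v m lam : ℝ}
    (hu : u ∈ T) (hv : v ∈ T) (hm : m ∈ T) (hum : u ≠ m) (hvm : v ≠ m)
    (hlam : lam * u + (1 - lam) * v = m) :
    ddiff (T.erase m) f = lam * ddiff (T.erase u) f + (1 - lam) * ddiff (T.erase v) f := by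
  have h1 := ddiff_threeTerm T f hu hm hum
  have h2 := ddiff_threeTerm T f hv hm hvm
  linear_combination (-lam) * h1 + (lam - 1) * h2 + (ddiff T f) * hlam

lemma ddiff_singleton (a : ℝ) (f : ℝ → ℝ) : ddiff {a} f = f a := by
  simp [ddiff]

lemma ddiff_pair (a b : ℝ) (hab : a ≠ b) (f : ℝ → ℝ) :
    ddiff {a, b} f = (f b - f a) / (b - a) := by
  have e1 : ({a,b}:Finset ℝ).erase a = {b} := Finset.erase_insert (by simp [hab])
  have e2 : ({a,b}:Finset ℝ).erase b = {a} := by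
    rw [Finset.pair_comm]; exact Finset.erase_insert (by simp [Ne.symm hab])
  rw [ddiff, Finset.sum_pair hab, e1, e2, Finset.prod_singleton, Finset.prod_singleton]
  have h1 : b - a ≠ 0 := sub_ne_zero.2 (Ne.symm hab)
  have h2 : a - b ≠ 0 := sub_ne_zero.2 hab
  field_simp
  ring

lemma ddiff_const (T : Finset ℝ) (c : ℝ) (hT : 2 ≤ T.card) : ddiff T (fun _ => c) = 0 := by
  classical
  induction T using Finset.strongInduction with
  | _ T IH =>
    rcases Finset.one_lt_card.1 hT with ⟨u, hu, v, hv, huv⟩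
    rcases Nat.lt_or_ge T.card 3 with h3 | h3
    · have hcard : T.card = 2 := le_antisymm (by omega) hT
      rcases Finset.card_eq_two.1 hcard with ⟨a, b, hab, rfl⟩
      rw [ddiff_pair a b hab]
      simp
    · have hkey := ddiff_threeTerm T (fun _ => c) hu hv huv
      have c1 : ddiff (T.erase u) (fun _ => c) = 0 := by
        apply IH _ (Finset.erase_ssubset hu)
        rw [Finset.card_erase_of_mem hu]; omega
      have c2 : ddiff (T.erase v) (fun _ => c) = 0 := by
        apply IH _ (Finset.erase_ssubset hv)
        rw [Finset.card_erase_of_mem hv]; omega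
      have hne : v - u ≠ 0 := sub_ne_zero.2 (fun e => huv e.symm)
      rw [c1, c2] at hkey
      have h0 : (v - u) * ddiff T (fun _ => c) = 0 := by linarith
      rcases mul_eq_zero.1 h0 with h | h
      · exact absurd h hne
      · exact h


lemma nodeInj {x h : ℝ} (hh : h ≠ 0) : Function.Injective (fun k : ℕ => x + k * h) := by
  intro a b hab
  simp only at hab
  have : (a : ℝ) = b := by
    have := mul_right_cancel₀ hh (by linarith : (a:ℝ) * h = b * h)
    exact this
  exact_mod_cast this

lemma ddiff_AP (f : ℝ → ℝ) {h : ℝ} (hh : h ≠ 0) :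
    ∀ (m : ℕ) (x : ℝ),
      ddiff ((Finset.range (m+1)).image (fun k : ℕ => x + k * h)) f
        = (dOp h)^[m] f x / (m.factorial * h ^ m) := by
  intro m
  induction m with
  | zero =>
    intro x
    simp [ddiff_singleton]
  | succ m IH =>
    intro x
    set e : ℕ → ℝ := fun k : ℕ => x + k * h with he
    have hinj : Function.Injective e := nodeInj hh
    set T : Finset ℝ := (Finset.range (m+2)).image e with hT
    have hu : e 0 ∈ T := Finset.mem_image_of_mem e (by simp)
    have hv : e (m+1) ∈ T := Finset.mem_image_of_mem e (by simp)
    have huv : e 0 ≠ e (m+1) := fun hc => by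
      have := hinj hc; omega
    -- T.erase (e 0)
    have hrange0 : (Finset.range (m+2)).erase 0 = (Finset.range (m+1)).image Nat.succ := by
      ext k
      simp only [Finset.mem_erase, Finset.mem_range, Finset.mem_image]
      constructor
      · rintro ⟨hk0, hk⟩; exact ⟨k - 1, by omega, by omega⟩
      · rintro ⟨j, hj, rfl⟩; omega
    have e1 : T.erase (e 0) = (Finset.range (m+1)).image (fun k : ℕ => (x + h) + k * h) := by
      rw [hT, ← Finset.image_erase hinj, hrange0, Finset.image_image]
      apply Finset.image_congr
      intro k _
      simp only [Function.comp_apply, he]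
      push_cast
      ring
    have e2 : T.erase (e (m+1)) = (Finset.range (m+1)).image e := by
      rw [hT, ← Finset.image_erase hinj]
      congr 1
      ext k
      simp only [Finset.mem_erase, Finset.mem_range]
      omega
    have key := ddiff_threeTerm T f hu hv huv
    rw [e1, e2, IH (x + h), IH x] at key
    have hiter : (dOp h)^[m] f (x + h) - (dOp h)^[m] f x = (dOp h)^[m+1] f x := by
      rw [Function.iterate_succ_apply' (dOp h) m f]
      rfl
    have hspan : e (m+1) - e 0 = ((m:ℝ)+1) * h := by simp only [he]; push_cast; ring
    rw [hspan] at key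
    have hfac : ((m+1).factorial : ℝ) * h ^ (m+1) = ((m+1) * h) * (m.factorial * h ^ m) := by
      rw [Nat.factorial_succ]
      push_cast
      ring
    have hm1 : ((m:ℝ)+1) * h ≠ 0 := mul_ne_zero (by positivity) hh
    have hD : (m.factorial : ℝ) * h ^ m ≠ 0 :=
      mul_ne_zero (Nat.cast_ne_zero.2 m.factorial_ne_zero) (pow_ne_zero _ hh)
    rw [div_sub_div_same, hiter, div_eq_iff hD] at key
    rw [hfac, eq_div_iff (mul_ne_zero hm1 hD)]
    linear_combination -key


lemma grid_nonneg {I : Set ℝ} (hord : I.OrdConnected) {f : ℝ → ℝ} {n : ℕ}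
    (hf : JensenConvexOrder n I f) (x h : ℝ) (hh : 0 < h) (M : ℕ)
    (hxI : x ∈ I) (hMI : x + M * h ∈ I) :
    ∀ K : Finset ℕ, K ⊆ Finset.range (M+1) → K.card = n + 2 →
      0 ≤ ddiff (K.image (fun k : ℕ => x + k * h)) f := by
  have hgrid : ∀ k : ℕ, k ≤ M → x + k * h ∈ I := by
    intro k hk
    apply hord.out hxI hMI
    constructor
    · nlinarith [hh.le, Nat.cast_nonneg (α := ℝ) k]
    · have : (k : ℝ) ≤ M := by exact_mod_cast hk
      nlinarith
  set e : ℕ → ℝ := fun k : ℕ => x + k * h with he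
  have hinj : Function.Injective e := nodeInj hh.ne'
  suffices H : ∀ d : ℕ, ∀ K : Finset ℕ, K ⊆ Finset.range (M+1) → K.card = n + 2 →
      ∀ hne : K.Nonempty, K.max' hne - K.min' hne = d → 0 ≤ ddiff (K.image e) f by
    intro K hKr hKc
    have hne : K.Nonempty := Finset.card_pos.1 (by omega)
    exact H _ K hKr hKc hne rfl
  intro d
  induction d using Nat.strong_induction_on with
  | _ d IH =>
    intro K hKr hKc hne hspan
    set a := K.min' hne with ha
    set b := K.max' hne with hb
    have haK : a ∈ K := K.min'_mem hne
    have hbK : b ∈ K := K.max'_mem hne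
    have hab : a < b := K.min'_lt_max'_of_card (by omega)
    have hbM : b ≤ M := by
      have := hKr hbK; simp [Finset.mem_range] at this; omega
    have haM : a ≤ M := le_trans hab.le hbM
    have hsub : K ⊆ Finset.Icc a b := by
      intro k hk
      simp only [Finset.mem_Icc]
      exact ⟨K.min'_le k hk, K.le_max' k hk⟩
    have hcard_le : n + 2 ≤ b + 1 - a := by
      have := Finset.card_le_card hsub
      rw [Nat.card_Icc] at this
      omega
    rcases eq_or_lt_of_le hcard_le with heq | hlt
    · -- consecutive case : b - a = n+1, K = Icc a b
      have hKeq : K = Finset.Icc a b := by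
        apply Finset.eq_of_subset_of_card_le hsub
        rw [Nat.card_Icc]; omega
      have hb_eq : b = a + (n+1) := by omega
      have himg : K.image e = (Finset.range (n+2)).image (fun j : ℕ => (x + a * h) + j * h) := by
        rw [hKeq, hb_eq]
        have : Finset.Icc a (a + (n+1)) = (Finset.range (n+2)).image (fun j => a + j) := by
          ext k
          simp only [Finset.mem_Icc, Finset.mem_image, Finset.mem_range]
          constructor
          · intro hk; exact ⟨k - a, by omega, by omega⟩
          · rintro ⟨j, hj, rfl⟩; omega
        rw [this, Finset.image_image]
        apply Finset.image_congr
        intro j _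
        simp only [Function.comp_apply, he]
        push_cast
        ring
      rw [himg, ddiff_AP f hh.ne' (n+1) (x + a*h)]
      apply div_nonneg
      · apply hf h hh (x + a*h) (hgrid a haM)
        have : x + a*h + ((n:ℝ) + 1) * h = x + b * h := by
          rw [hb_eq]; push_cast; ring
        rw [this]
        exact hgrid b hbM
      · positivity
    · -- gap case
      have hgap : ∃ m, a < m ∧ m < b ∧ m ∉ K := by
        by_contra hcon
        push_neg at hcon
        have : Finset.Icc a b ⊆ K := by
          intro k hk
          simp only [Finset.mem_Icc] at hk
          rcases eq_or_lt_of_le hk.1 with rfl | h1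
          · exact haK
          rcases eq_or_lt_of_le hk.2 with rfl | h2
          · exact hbK
          exact hcon k h1 h2
        have := Finset.card_le_card this
        rw [Nat.card_Icc] at this
        omega
      obtain ⟨m, ham, hmb, hmK⟩ := hgap
      set T : Finset ℕ := insert m K with hT
      have haT : a ∈ T := Finset.mem_insert_of_mem haK
      have hbT : b ∈ T := Finset.mem_insert_of_mem hbK
      have hmT : m ∈ T := Finset.mem_insert_self m K
      have hTcard : T.card = n + 3 := by
        rw [Finset.card_insert_of_notMem hmK]; omega
      have hTr : T ⊆ Finset.range (M+1) := by
        intro k hk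
        rcases Finset.mem_insert.1 hk with rfl | hk
        · simp only [Finset.mem_range]; omega
        · exact hKr hk
      -- the two reduced sets
      set K1 := T.erase a with hK1
      set K2 := T.erase b with hK2
      have hK1c : K1.card = n + 2 := by rw [hK1, Finset.card_erase_of_mem haT]; omega
      have hK2c : K2.card = n + 2 := by rw [hK2, Finset.card_erase_of_mem hbT]; omega
      have hK1r : K1 ⊆ Finset.range (M+1) := (Finset.erase_subset _ _).trans hTr
      have hK2r : K2 ⊆ Finset.range (M+1) := (Finset.erase_subset _ _).trans hTr
      have hK1ne : K1.Nonempty := Finset.card_pos.1 (by omega)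
      have hK2ne : K2.Nonempty := Finset.card_pos.1 (by omega)
      -- spans
      have hbK1 : b ∈ K1 := Finset.mem_erase.2 ⟨by omega, hbT⟩
      have haK2 : a ∈ K2 := Finset.mem_erase.2 ⟨by omega, haT⟩
      have hK1max : K1.max' hK1ne = b := by
        apply le_antisymm
        · apply Finset.max'_le
          intro k hk
          have hkT := Finset.mem_of_mem_erase hk
          rcases Finset.mem_insert.1 hkT with rfl | hk'
          · omega
          · exact K.le_max' k hk'
        · exact Finset.le_max' _ b hbK1
      have hK1min : a < K1.min' hK1ne := by
        have h1 : a ≤ K1.min' hK1ne := by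
          apply Finset.le_min'
          intro k hk
          have hkT := Finset.mem_of_mem_erase hk
          rcases Finset.mem_insert.1 hkT with rfl | hk'
          · omega
          · exact K.min'_le k hk'
        have h2 : K1.min' hK1ne ≠ a := fun hc => by
          have := K1.min'_mem hK1ne
          rw [hc] at this
          exact (Finset.mem_erase.1 this).1 rfl
        omega
      have hK2min : K2.min' hK2ne = a := by
        apply le_antisymm
        · exact Finset.min'_le _ a haK2
        · apply Finset.le_min'
          intro k hk
          have hkT := Finset.mem_of_mem_erase hk
          rcases Finset.mem_insert.1 hkT with rfl | hk'
          · omega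
          · exact K.min'_le k hk'
      have hK2max : K2.max' hK2ne < b := by
        have h1 : K2.max' hK2ne ≤ b := by
          apply Finset.max'_le
          intro k hk
          have hkT := Finset.mem_of_mem_erase hk
          rcases Finset.mem_insert.1 hkT with rfl | hk'
          · omega
          · exact K.le_max' k hk'
        have h2 : K2.max' hK2ne ≠ b := fun hc => by
          have := K2.max'_mem hK2ne
          rw [hc] at this
          exact (Finset.mem_erase.1 this).1 rfl
        omega
      have hIH1 : 0 ≤ ddiff (K1.image e) f :=
        IH _ (by omega) K1 hK1r hK1c hK1ne rfl
      have hIH2 : 0 ≤ ddiff (K2.image e) f :=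
        IH _ (by omega) K2 hK2r hK2c hK2ne rfl
      -- split identity
      set lam : ℝ := ((b : ℝ) - m) / ((b : ℝ) - a) with hlamdef
      have hba : (0:ℝ) < (b:ℝ) - a := by
        have : (a:ℝ) < b := by exact_mod_cast hab
        linarith
      have hlam0 : 0 ≤ lam := by
        apply div_nonneg _ hba.le
        have : (m:ℝ) < b := by exact_mod_cast hmb
        linarith
      have hlam1 : 1 - lam ≥ 0 := by
        rw [hlamdef]
        rw [ge_iff_le, sub_nonneg, div_le_one hba]
        have : (a:ℝ) ≤ m := by exact_mod_cast ham.le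
        linarith
      have hlameq : lam * e a + (1 - lam) * e b = e m := by
        have hek : ∀ k : ℕ, e k = x + k * h := fun k => rfl
        rw [hek, hek, hek, hlamdef]
        field_simp
        ring
      have hsplit := ddiff_split (T.image e) f
        (Finset.mem_image_of_mem e haT) (Finset.mem_image_of_mem e hbT)
        (Finset.mem_image_of_mem e hmT)
        (fun hc => by have := hinj hc; omega)
        (fun hc => by have := hinj hc; omega)
        hlameq
      rw [← Finset.image_erase hinj, ← Finset.image_erase hinj, ← Finset.image_erase hinj] at hsplit
      have herase : T.erase m = K := by
        rw [hT, Finset.erase_insert hmK]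
      rw [herase] at hsplit
      rw [hsplit]
      exact add_nonneg (mul_nonneg hlam0 hIH1) (mul_nonneg hlam1 hIH2)


lemma rat_grid (q : ℚ) (hq : 0 ≤ q) (N : ℕ) (hN : 0 < N) (hd : q.den ∣ N) :
    ∃ j : ℕ, (q : ℝ) = j / N := by
  obtain ⟨t, ht⟩ := hd
  have hden : (0:ℕ) < q.den := q.pos
  have ht0 : 0 < t := by
    rcases Nat.eq_zero_or_pos t with rfl | h
    · omega
    · exact h
  refine ⟨q.num.toNat * t, ?_⟩
  have hnum : 0 ≤ q.num := Rat.num_nonneg.2 hq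
  have hcast : (q : ℝ) = (q.num : ℝ) / (q.den : ℝ) := by
    rw [Rat.cast_def]
  have h0 : ((q.num.toNat : ℕ) : ℝ) = (q.num : ℝ) := by
    exact_mod_cast congrArg (fun z : ℤ => (z : ℝ)) (Int.toNat_of_nonneg hnum)
  have h1 : ((q.num.toNat * t : ℕ) : ℝ) = (q.num : ℝ) * t := by
    push_cast [h0]
    ring
  rw [hcast, h1, ht]
  push_cast
  rw [mul_div_mul_right _ _ (by positivity : (t:ℝ) ≠ 0)]

lemma rat_nodes_nonneg {I : Set ℝ} (hord : I.OrdConnected) {f : ℝ → ℝ} {n : ℕ}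
    (hf : JensenConvexOrder n I f) (S : Finset ℝ) (hS : ↑S ⊆ I)
    (hrat : ∀ s ∈ S, ∃ q : ℚ, (q : ℝ) = s) (hcard : S.card = n + 2) :
    0 ≤ ddiff S f := by
  classical
  have hne : S.Nonempty := Finset.card_pos.1 (by omega)
  set a := S.min' hne with ha
  set b := S.max' hne with hb
  have haS : a ∈ S := S.min'_mem hne
  have hbS : b ∈ S := S.max'_mem hne
  set qf : ℝ → ℚ := fun s => if h : ∃ q : ℚ, (q:ℝ) = s then h.choose else 0 with hqfdef
  have hqf : ∀ s ∈ S, ((qf s : ℚ) : ℝ) = s := by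
    intro s hs
    have h := hrat s hs
    simp only [hqfdef, dif_pos h]
    exact h.choose_spec
  set N : ℕ := ∏ s ∈ S, (qf s - qf a).den with hNdef
  have hN : 0 < N := Finset.prod_pos (fun s _ => (qf s - qf a).pos)
  have hNr : (0:ℝ) < (1:ℝ)/N := by positivity
  have hks : ∀ s ∈ S, ∃ j : ℕ, s = a + j * ((1:ℝ)/N) := by
    intro s hs
    have hq : ((qf s - qf a : ℚ) : ℝ) = s - a := by
      push_cast
      rw [hqf s hs, hqf a haS]
    have hq0 : 0 ≤ qf s - qf a := by
      have h2 : (0:ℝ) ≤ ((qf s - qf a : ℚ) : ℝ) := by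
        rw [hq, sub_nonneg]
        exact S.min'_le s hs
      exact_mod_cast h2
    have hdvd : (qf s - qf a).den ∣ N :=
      Finset.dvd_prod_of_mem (fun s => (qf s - qf a).den) hs
    obtain ⟨j, hj⟩ := rat_grid _ hq0 N hN hdvd
    refine ⟨j, ?_⟩
    rw [hq] at hj
    rw [mul_one_div]
    linarith
  set k : ℝ → ℕ := fun s => if hs : s ∈ S then (hks s hs).choose else 0 with hkdef
  have hk : ∀ s ∈ S, s = a + k s * ((1:ℝ)/N) := by
    intro s hs
    simp only [hkdef, dif_pos hs]
    exact (hks s hs).choose_spec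
  have hinj : Set.InjOn k ↑S := by
    intro s1 h1 s2 h2 heq
    rw [hk s1 h1, hk s2 h2, heq]
  set M := k b with hM
  have hkle : ∀ s ∈ S, k s ≤ M := by
    intro s hs
    have h1 := hk s hs
    have h2 := hk b hbS
    have hsb : s ≤ b := S.le_max' s hs
    rw [h1, h2] at hsb
    have : (k s : ℝ) ≤ (k b : ℝ) := by
      have := (add_le_add_iff_left a).1 hsb
      exact le_of_mul_le_mul_right this hNr
    exact_mod_cast this
  have hKr : S.image k ⊆ Finset.range (M+1) := by
    intro j hj
    rw [Finset.mem_image] at hj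
    obtain ⟨s, hs, rfl⟩ := hj
    rw [Finset.mem_range]
    exact Nat.lt_succ_of_le (hkle s hs)
  have hKc : (S.image k).card = n + 2 := by
    rw [Finset.card_image_of_injOn hinj, hcard]
  have hMI : a + M * ((1:ℝ)/N) ∈ I := by
    rw [← hk b hbS]
    exact hS hbS
  have hgrid := grid_nonneg hord hf a ((1:ℝ)/N) hNr M (hS haS) hMI (S.image k) hKr hKc
  have himg : (S.image k).image (fun j : ℕ => a + j * ((1:ℝ)/N)) = S := by
    rw [Finset.image_image]
    have : S.image ((fun j : ℕ => a + j * ((1:ℝ)/N)) ∘ k) = S.image id := by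
      apply Finset.image_congr
      intro s hs
      simp only [Function.comp_apply, id]
      exact (hk s hs).symm
    rw [this, Finset.image_id]
  rwa [himg] at hgrid


lemma ddiff_insert_expand (S : Finset ℝ) (c : ℝ) (hc : c ∉ S) (g : ℝ → ℝ) :
    ddiff (insert c S) g
      = g c / ∏ s ∈ S, (c - s)
        + ∑ t ∈ S, g t / ((t - c) * ∏ s ∈ S.erase t, (t - s)) := by
  rw [ddiff, Finset.sum_insert hc, Finset.erase_insert hc]
  congr 1
  apply Finset.sum_congr rfl
  intro t ht
  have htc : c ≠ t := fun hct => hc (hct ▸ ht)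
  rw [Finset.erase_insert_of_ne htc, Finset.prod_insert
    (fun hmem => hc (Finset.mem_of_mem_erase hmem))]

lemma ddiff_ratio (S : Finset ℝ) (c : ℝ) (hc : c ∉ S) (hS : S.Nonempty) (φ : ℝ → ℝ) :
    ddiff S (fun y => (φ y - φ c) / (y - c)) = ddiff (insert c S) φ := by
  have hcard : 2 ≤ (insert c S).card := by
    rw [Finset.card_insert_of_notMem hc]
    have := Finset.card_pos.2 hS
    omega
  have hconst := ddiff_const (insert c S) (φ c) hcard
  rw [ddiff_insert_expand S c hc] at hconst
  rw [ddiff_insert_expand S c hc]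
  have hexp : ddiff S (fun y => (φ y - φ c) / (y - c))
      = ∑ t ∈ S, φ t / ((t - c) * ∏ s ∈ S.erase t, (t - s))
        - ∑ t ∈ S, φ c / ((t - c) * ∏ s ∈ S.erase t, (t - s)) := by
    rw [← Finset.sum_sub_distrib, ddiff]
    apply Finset.sum_congr rfl
    intro t ht
    rw [div_div, ← sub_div]
  rw [hexp]
  linarith

noncomputable def slope' (φ : ℝ → ℝ) (u v : ℝ) : ℝ := (φ v - φ u) / (v - u)

def MCon (m : ℕ) (D : Set ℝ) (φ : ℝ → ℝ) : Prop :=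
  ∀ S : Finset ℝ, ↑S ⊆ D → S.card = m + 2 → 0 ≤ ddiff S φ

lemma triple_card {a b c : ℝ} (hab : a < b) (hbc : b < c) :
    ({a, b, c} : Finset ℝ).card = 3 := by
  rw [Finset.card_insert_of_notMem (by simp [hab.ne, (hab.trans hbc).ne]),
      Finset.card_insert_of_notMem (by simp [hbc.ne]), Finset.card_singleton]

lemma slope_mono {φ : ℝ → ℝ} {D : Set ℝ} (hc : MCon 1 D φ) {a b c : ℝ}
    (hab : a < b) (hbc : b < c) (haD : a ∈ D) (hbD : b ∈ D) (hcD : c ∈ D) :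
    slope' φ a b ≤ slope' φ b c := by
  have hsub : ↑({a, b, c} : Finset ℝ) ⊆ D := by
    intro x hx
    simp only [Finset.coe_insert, Finset.coe_singleton, Set.mem_insert_iff,
      Set.mem_singleton_iff] at hx
    rcases hx with rfl | rfl | rfl <;> assumption
  have hdd := hc {a, b, c} hsub (triple_card hab hbc)
  have ha : a ∈ ({a, b, c} : Finset ℝ) := by simp
  have hc' : c ∈ ({a, b, c} : Finset ℝ) := by simp
  have hkey := ddiff_threeTerm {a, b, c} φ ha hc' (hab.trans hbc).ne
  have e1 : ({a, b, c} : Finset ℝ).erase a = {b, c} := by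
    ext x
    simp only [Finset.mem_erase, Finset.mem_insert, Finset.mem_singleton]
    constructor
    · rintro ⟨hx, rfl | rfl | rfl⟩ <;> tauto
    · rintro (rfl | rfl)
      · exact ⟨hab.ne', by tauto⟩
      · exact ⟨(hab.trans hbc).ne', by tauto⟩
  have e2 : ({a, b, c} : Finset ℝ).erase c = {a, b} := by
    ext x
    simp only [Finset.mem_erase, Finset.mem_insert, Finset.mem_singleton]
    constructor
    · rintro ⟨hx, rfl | rfl | rfl⟩ <;> tauto
    · rintro (rfl | rfl)
      · exact ⟨(hab.trans hbc).ne, by tauto⟩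
      · exact ⟨hbc.ne, by tauto⟩
  rw [e1, e2, ddiff_pair b c hbc.ne, ddiff_pair a b hab.ne] at hkey
  have hca : 0 < c - a := by linarith
  have : 0 ≤ (c - a) * ddiff {a, b, c} φ := mul_nonneg hca.le hdd
  rw [← hkey] at this
  unfold slope'
  linarith

lemma mcon_lipschitz (I : Set ℝ) (hIopen : IsOpen I) :
    ∀ m : ℕ, 1 ≤ m → ∀ (D : Set ℝ) (φ : ℝ → ℝ), D ⊆ I →
      (∀ u v : ℝ, u < v → Set.Ioo u v ⊆ I → (D ∩ Set.Ioo u v).Nonempty) →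
      MCon m D φ →
      ∀ x ∈ I, ∃ ε > 0, Set.Icc (x - ε) (x + ε) ⊆ I ∧
        ∃ L : ℝ, ∀ y ∈ D ∩ Set.Icc (x - ε) (x + ε), ∀ z ∈ D ∩ Set.Icc (x - ε) (x + ε),
          |φ y - φ z| ≤ L * |y - z| := by
  intro m
  induction m with
  | zero => omega
  | succ m IH =>
    intro _ D φ hDI hdense hφ x hx
    rcases Metric.isOpen_iff.1 hIopen x hx with ⟨r, hr, hball⟩
    rcases Nat.eq_zero_or_pos m with rfl | hm
    · -- base case : φ is convex (MCon 1)
      set ε := r / 8 with hε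
      have hεpos : 0 < ε := by positivity
      have hIcc : Set.Icc (x - 4*ε) (x + 4*ε) ⊆ I := by
        intro y hy
        apply hball
        rw [Metric.mem_ball, Real.dist_eq]
        rw [Set.mem_Icc] at hy
        rw [abs_lt]
        constructor <;> [linarith ; linarith]
      have hIoosub : ∀ u v : ℝ, x - 4*ε ≤ u → v ≤ x + 4*ε → Set.Ioo u v ⊆ I := by
        intro u v hu hv
        intro y hy
        rw [Set.mem_Ioo] at hy
        exact hIcc ⟨by linarith, by linarith⟩
      obtain ⟨p1, hp1D, hp1⟩ := hdense (x - 3*ε) (x - 2*ε) (by linarith)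
        (hIoosub _ _ (by linarith) (by linarith))
      rw [Set.mem_Ioo] at hp1
      obtain ⟨p2, hp2D, hp2⟩ := hdense p1 (x - 2*ε) (by linarith)
        (hIoosub _ _ (by linarith) (by linarith))
      rw [Set.mem_Ioo] at hp2
      obtain ⟨r1, hr1D, hr1⟩ := hdense (x + 2*ε) (x + 3*ε) (by linarith)
        (hIoosub _ _ (by linarith) (by linarith))
      rw [Set.mem_Ioo] at hr1
      obtain ⟨r2, hr2D, hr2⟩ := hdense r1 (x + 3*ε) (by linarith)
        (hIoosub _ _ (by linarith) (by linarith))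
      rw [Set.mem_Ioo] at hr2
      refine ⟨ε, hεpos, ?_, max |slope' φ p1 p2| |slope' φ r1 r2|, ?_⟩
      · intro y hy
        rw [Set.mem_Icc] at hy
        exact hIcc ⟨by linarith, by linarith⟩
      set L := max |slope' φ p1 p2| |slope' φ r1 r2| with hL
      have hLnn : 0 ≤ L := le_trans (abs_nonneg _) (le_max_left _ _)
      have key : ∀ y z : ℝ, y ∈ D → z ∈ D → y ∈ Set.Icc (x-ε) (x+ε) →
          z ∈ Set.Icc (x-ε) (x+ε) → y < z → |φ z - φ y| ≤ L * (z - y) := by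
        intro y z hyD hzD hy hz hyz
        rw [Set.mem_Icc] at hy hz
        have s1 : slope' φ p1 p2 ≤ slope' φ p2 y :=
          slope_mono hφ hp2.1 (by linarith) hp1D hp2D hyD
        have s2 : slope' φ p2 y ≤ slope' φ y z :=
          slope_mono hφ (by linarith) hyz hp2D hyD hzD
        have s3 : slope' φ y z ≤ slope' φ z r1 :=
          slope_mono hφ hyz (by linarith) hyD hzD hr1D
        have s4 : slope' φ z r1 ≤ slope' φ r1 r2 :=
          slope_mono hφ (by linarith) hr2.1 hzD hr1D hr2D
        have habs : |slope' φ y z| ≤ L := by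
          rw [abs_le]
          constructor
          · have : -|slope' φ p1 p2| ≤ slope' φ p1 p2 := neg_abs_le _
            have h2 : |slope' φ p1 p2| ≤ L := le_max_left _ _
            linarith
          · have : slope' φ r1 r2 ≤ |slope' φ r1 r2| := le_abs_self _
            have h2 : |slope' φ r1 r2| ≤ L := le_max_right _ _
            linarith
        have hzy : z - y ≠ 0 := sub_ne_zero.2 (ne_of_gt hyz)
        have heq : slope' φ y z * (z - y) = φ z - φ y := div_mul_cancel₀ _ hzy
        rw [← heq, abs_mul, abs_of_pos (by linarith : (0:ℝ) < z - y)]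
        exact mul_le_mul_of_nonneg_right habs (by linarith)
      intro y hy z hz
      rcases lt_trichotomy y z with h | h | h
      · calc |φ y - φ z| = |φ z - φ y| := abs_sub_comm _ _
          _ ≤ L * (z - y) := key y z hy.1 hz.1 hy.2 hz.2 h
          _ = L * |y - z| := by rw [abs_sub_comm, abs_of_pos (by linarith : (0:ℝ) < z - y)]
      · rw [h]; simp
      · calc |φ y - φ z| ≤ L * (y - z) := key z y hz.1 hy.1 hz.2 hy.2 h
          _ = L * |y - z| := by rw [abs_of_pos (by linarith : (0:ℝ) < y - z)]
    · -- inductive step, m ≥ 1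
      set ε0 := r / 4 with hε0
      have hε0pos : 0 < ε0 := by positivity
      have hIcc0 : Set.Icc (x - 2*ε0) (x + 2*ε0) ⊆ I := by
        intro y hy
        apply hball
        rw [Metric.mem_ball, Real.dist_eq, abs_lt]
        rw [Set.mem_Icc] at hy
        constructor <;> [linarith ; linarith]
      obtain ⟨xh, hxhD, hxhIoo⟩ := hdense (x - 2*ε0) (x - ε0) (by linarith)
        (fun y hy => hIcc0 ⟨le_of_lt hy.1, by linarith [hy.2, hε0pos]⟩)
      rw [Set.mem_Ioo] at hxhIoo
      set D' := D \ {xh} with hD'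
      have hD'I : D' ⊆ I := fun y hy => hDI hy.1
      have hdense' : ∀ u v : ℝ, u < v → Set.Ioo u v ⊆ I → (D' ∩ Set.Ioo u v).Nonempty := by
        intro u v huv hIoo
        obtain ⟨w, hwD, hw⟩ := hdense u v huv hIoo
        rw [Set.mem_Ioo] at hw
        by_cases hwx : w = xh
        · obtain ⟨w2, hw2D, hw2⟩ := hdense u w hw.1
            (fun y hy => hIoo ⟨hy.1, lt_trans hy.2 hw.2⟩)
          rw [Set.mem_Ioo] at hw2
          have hne : w2 ≠ xh := by rw [← hwx]; exact ne_of_lt hw2.2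
          exact ⟨w2, ⟨⟨hw2D, fun hc => hne (Set.mem_singleton_iff.1 hc)⟩,
            Set.mem_Ioo.2 ⟨hw2.1, lt_trans hw2.2 hw.2⟩⟩⟩
        · exact ⟨w, ⟨⟨hwD, fun hc => hwx (Set.mem_singleton_iff.1 hc)⟩, Set.mem_Ioo.2 hw⟩⟩
      set g : ℝ → ℝ := fun y => (φ y - φ xh) / (y - xh) with hg
      have hgM : MCon m D' g := by
        intro S hSD' hScard
        have hxS : xh ∉ S := fun hc => (hSD' (Finset.mem_coe.2 hc)).2 rfl
        have hSne : S.Nonempty := Finset.card_pos.1 (by omega)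
        rw [hg, ddiff_ratio S xh hxS hSne φ]
        apply hφ
        · rw [Finset.coe_insert]
          exact Set.insert_subset_iff.2 ⟨hxhD, fun y hy => (hSD' hy).1⟩
        · rw [Finset.card_insert_of_notMem hxS]; omega
      obtain ⟨ε1, hε1pos, hIcc1, L1, hL1⟩ := IH hm D' g hD'I hdense' hgM x hx
      set L1' := |L1| with hL1'def
      have hL1'' : ∀ y ∈ D' ∩ Set.Icc (x-ε1) (x+ε1), ∀ z ∈ D' ∩ Set.Icc (x-ε1) (x+ε1),
          |g y - g z| ≤ L1' * |y - z| := by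
        intro y hy z hz
        exact le_trans (hL1 y hy z hz)
          (mul_le_mul_of_nonneg_right (le_abs_self L1) (abs_nonneg _))
      have hL1nn : 0 ≤ L1' := abs_nonneg _
      set ε := min ε0 ε1 with hεdef
      have hεpos : 0 < ε := lt_min hε0pos hε1pos
      have hεle0 : ε ≤ ε0 := min_le_left _ _
      have hεle1 : ε ≤ ε1 := min_le_right _ _
      have hWsub : Set.Icc (x-ε) (x+ε) ⊆ Set.Icc (x-ε1) (x+ε1) :=
        Set.Icc_subset_Icc (by linarith) (by linarith)
      have hWI : Set.Icc (x-ε) (x+ε) ⊆ I := fun y hy => hIcc1 (hWsub hy)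
      have hxhlt : xh < x - ε := by linarith [hxhIoo.2]
      obtain ⟨w0, hw0D, hw0⟩ := hdense (x-ε) (x+ε) (by linarith)
        (fun y hy => hWI ⟨le_of_lt hy.1, le_of_lt hy.2⟩)
      rw [Set.mem_Ioo] at hw0
      have hw0ne : w0 ≠ xh := by intro hc; rw [hc] at hw0; linarith [hw0.1]
      have hw0D' : w0 ∈ D' := ⟨hw0D, fun hc => hw0ne (Set.mem_singleton_iff.1 hc)⟩
      set B := |g w0| + L1' * (2*ε) with hB
      have hgbound : ∀ y, y ∈ D' → y ∈ Set.Icc (x-ε) (x+ε) → |g y| ≤ B := by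
        intro y hyD hyW
        have h1 := hL1'' y ⟨hyD, hWsub hyW⟩ w0 ⟨hw0D', hWsub ⟨hw0.1.le, hw0.2.le⟩⟩
        have h2 : |y - w0| ≤ 2*ε := by
          rw [Set.mem_Icc] at hyW
          rw [abs_le]; constructor <;> [linarith [hw0.2] ; linarith [hw0.1]]
        have h3 : |g y| ≤ |g y - g w0| + |g w0| := by
          calc |g y| = |(g y - g w0) + g w0| := by congr 1; ring
            _ ≤ |g y - g w0| + |g w0| := abs_add_le _ _
        have h4 : L1' * |y - w0| ≤ L1' * (2*ε) := mul_le_mul_of_nonneg_left h2 hL1nn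
        rw [hB]
        linarith
      refine ⟨ε, hεpos, hWI, B + ((x+ε) - xh) * L1', ?_⟩
      rintro y ⟨hyD, hyW⟩ z ⟨hzD, hzW⟩
      have hyIcc := Set.mem_Icc.1 hyW
      have hzIcc := Set.mem_Icc.1 hzW
      have hyne : y ≠ xh := (ne_of_gt (lt_of_lt_of_le hxhlt hyIcc.1))
      have hzne : z ≠ xh := (ne_of_gt (lt_of_lt_of_le hxhlt hzIcc.1))
      have hyD' : y ∈ D' := ⟨hyD, fun hc => hyne (Set.mem_singleton_iff.1 hc)⟩
      have hzD' : z ∈ D' := ⟨hzD, fun hc => hzne (Set.mem_singleton_iff.1 hc)⟩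
      have hysub : y - xh ≠ 0 := sub_ne_zero.2 hyne
      have hzsub : z - xh ≠ 0 := sub_ne_zero.2 hzne
      have hphiy : φ y = φ xh + (y - xh) * g y := by
        rw [hg]
        field_simp
        ring
      have hphiz : φ z = φ xh + (z - xh) * g z := by
        rw [hg]
        field_simp
        ring
      have hgyz := hL1'' y ⟨hyD', hWsub hyW⟩ z ⟨hzD', hWsub hzW⟩
      have hgy := hgbound y hyD' hyW
      have hC : (0:ℝ) ≤ (x+ε) - xh := by linarith
      calc |φ y - φ z| = |(y - z) * g y + (z - xh) * (g y - g z)| := by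
            rw [hphiy, hphiz]; congr 1; ring
        _ ≤ |(y - z) * g y| + |(z - xh) * (g y - g z)| := abs_add_le _ _
        _ = |y - z| * |g y| + |z - xh| * |g y - g z| := by rw [abs_mul, abs_mul]
        _ ≤ |y - z| * B + ((x+ε) - xh) * (L1' * |y - z|) := by
            apply add_le_add
            · exact mul_le_mul_of_nonneg_left hgy (abs_nonneg _)
            · have hz1 : |z - xh| ≤ (x+ε) - xh := by
                rw [abs_of_pos (by linarith [hzIcc.1] : (0:ℝ) < z - xh)]
                linarith [hzIcc.2]
              exact mul_le_mul hz1 hgyz (abs_nonneg _) hC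
        _ = (B + ((x+ε) - xh) * L1') * |y - z| := by ring


variable {I D : Set ℝ} {f : ℝ → ℝ}

lemma extension_exists (hIopen : IsOpen I) (hDI : D ⊆ I)
    (hdense : ∀ u v : ℝ, u < v → Set.Ioo u v ⊆ I → (D ∩ Set.Ioo u v).Nonempty)
    (hlip : ∀ x ∈ I, ∃ ε > 0, Set.Icc (x - ε) (x + ε) ⊆ I ∧
      ∃ L : ℝ, 0 ≤ L ∧ ∀ y ∈ D ∩ Set.Icc (x - ε) (x + ε), ∀ z ∈ D ∩ Set.Icc (x - ε) (x + ε),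
        |f y - f z| ≤ L * |y - z|) :
    ∃ g : ℝ → ℝ, ContinuousOn g I ∧ (∀ q ∈ D, g q = f q) ∧
      (∀ x ∈ I, Tendsto f (𝓝[D] x) (𝓝 (g x))) := by
  classical
  -- nearby points of D
  have hnear : ∀ y ∈ I, ∀ ρ > (0:ℝ), ∃ p ∈ D, |p - y| < ρ := by
    intro y hy ρ hρ
    obtain ⟨ε₀, hε₀, hIccI, _⟩ := hlip y hy
    set δ := min ρ ε₀ with hδ
    have hδpos : 0 < δ := lt_min hρ hε₀
    obtain ⟨p, hpD, hp⟩ := hdense (y - δ) y (by linarith)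
      (fun w hw => hIccI ⟨by rw [Set.mem_Ioo] at hw; have := min_le_right ρ ε₀; linarith [hw.1],
        by rw [Set.mem_Ioo] at hw; linarith [hw.2, hε₀]⟩)
    rw [Set.mem_Ioo] at hp
    refine ⟨p, hpD, ?_⟩
    rw [abs_lt]
    have := min_le_left ρ ε₀
    constructor <;> linarith [hp.1, hp.2]
  have hclos : ∀ x ∈ I, (𝓝[D] x).NeBot := by
    intro x hx
    rw [← mem_closure_iff_nhdsWithin_neBot, Metric.mem_closure_iff]
    intro ε hε
    obtain ⟨p, hpD, hp⟩ := hnear x hx ε hε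
    exact ⟨p, hpD, by rwa [Real.dist_eq, abs_sub_comm]⟩
  -- existence of limits
  have hex : ∀ x ∈ I, ∃ c : ℝ, Tendsto f (𝓝[D] x) (𝓝 c) := by
    intro x hx
    have hnb : (𝓝[D] x).NeBot := hclos x hx
    have hcauchy : Cauchy (Filter.map f (𝓝[D] x)) := by
      rw [Metric.cauchy_iff]
      refine ⟨Filter.map_neBot, ?_⟩
      intro ε hε
      obtain ⟨ε₀, hε₀, hIccI, L, hL0, hL⟩ := hlip x hx
      set δ := min ε₀ (ε / (2*L + 1)) with hδ
      have hδpos : 0 < δ := lt_min hε₀ (by positivity)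
      refine ⟨f '' (D ∩ Set.Ioo (x - δ) (x + δ)), ?_, ?_⟩
      · apply Filter.image_mem_map
        exact Filter.inter_mem self_mem_nhdsWithin
          (mem_nhdsWithin_of_mem_nhds (Ioo_mem_nhds (by linarith) (by linarith)))
      · rintro a ⟨p, ⟨hpD, hpI⟩, rfl⟩ b ⟨q, ⟨hqD, hqI⟩, rfl⟩
        rw [Set.mem_Ioo] at hpI hqI
        have hδ0 : δ ≤ ε₀ := min_le_left _ _
        have hpw : p ∈ Set.Icc (x - ε₀) (x + ε₀) := ⟨by linarith [hpI.1], by linarith [hpI.2]⟩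
        have hqw : q ∈ Set.Icc (x - ε₀) (x + ε₀) := ⟨by linarith [hqI.1], by linarith [hqI.2]⟩
        have h1 := hL p ⟨hpD, hpw⟩ q ⟨hqD, hqw⟩
        have h2 : |p - q| ≤ 2*δ := by
          rw [abs_le]; constructor <;> linarith [hpI.1, hpI.2, hqI.1, hqI.2]
        have h3 : L * |p - q| ≤ L * (2*δ) := mul_le_mul_of_nonneg_left h2 hL0
        have h4 : δ ≤ ε / (2*L + 1) := min_le_right _ _
        have h5 : L * (2*δ) < ε := by
          have h6 : (2*L) * δ ≤ (2*L) * (ε / (2*L+1)) :=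
            mul_le_mul_of_nonneg_left h4 (by linarith)
          have hc : (0:ℝ) < 2*L+1 := by linarith
          have h7 : (2*L) * (ε / (2*L+1)) < ε := by
            rw [← mul_div_assoc, div_lt_iff₀ hc]
            nlinarith
          linarith
        rw [Real.dist_eq]
        linarith
    obtain ⟨c, hc⟩ := CompleteSpace.complete hcauchy
    exact ⟨c, hc⟩
  set g : ℝ → ℝ := fun x =>
    if h : ∃ c : ℝ, Tendsto f (𝓝[D] x) (𝓝 c) then h.choose else 0 with hgdef
  have hgtend : ∀ x ∈ I, Tendsto f (𝓝[D] x) (𝓝 (g x)) := by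
    intro x hx
    have h := hex x hx
    simp only [hgdef, dif_pos h]
    exact h.choose_spec
  -- g = f on D
  have hgD : ∀ q ∈ D, g q = f q := by
    intro q hq
    have hqI : q ∈ I := hDI hq
    have h1 : Tendsto f (𝓝[D] q) (𝓝 (f q)) := by
      rw [Metric.tendsto_nhdsWithin_nhds]
      intro ε hε
      obtain ⟨ε₀, hε₀, hIccI, L, hL0, hL⟩ := hlip q hqI
      refine ⟨min ε₀ (ε / (L + 1)), lt_min hε₀ (by positivity), ?_⟩
      intro y hyD hyd
      rw [Real.dist_eq] at hyd ⊢
      have hd1 : |y - q| < ε₀ := lt_of_lt_of_le hyd (min_le_left _ _)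
      have hd2 : |y - q| < ε / (L+1) := lt_of_lt_of_le hyd (min_le_right _ _)
      have hyw : y ∈ Set.Icc (q - ε₀) (q + ε₀) := by
        rw [abs_lt] at hd1
        exact ⟨by linarith [hd1.1], by linarith [hd1.2]⟩
      have hqw : q ∈ Set.Icc (q - ε₀) (q + ε₀) := ⟨by linarith, by linarith⟩
      have h2 := hL y ⟨hyD, hyw⟩ q ⟨hq, hqw⟩
      have h3 : L * |y - q| ≤ L * (ε / (L+1)) :=
        mul_le_mul_of_nonneg_left hd2.le hL0
      have hc : (0:ℝ) < L+1 := by linarith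
      have h4 : L * (ε / (L+1)) < ε := by
        rw [← mul_div_assoc, div_lt_iff₀ hc]
        nlinarith
      linarith
    haveI := hclos q hqI
    exact tendsto_nhds_unique (hgtend q hqI) h1
  -- approximation property
  have happrox : ∀ y ∈ I, ∀ ρ > (0:ℝ), ∃ p ∈ D, |p - y| < ρ ∧ |f p - g y| < ρ := by
    intro y hy ρ hρ
    have htd := hgtend y hy
    rw [Metric.tendsto_nhdsWithin_nhds] at htd
    obtain ⟨δ, hδpos, hδ⟩ := htd ρ hρ
    obtain ⟨p, hpD, hp⟩ := hnear y hy (min ρ δ) (lt_min hρ hδpos)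
    refine ⟨p, hpD, lt_of_lt_of_le hp (min_le_left _ _), ?_⟩
    have := hδ hpD (by rw [Real.dist_eq]; exact lt_of_lt_of_le hp (min_le_right _ _))
    rwa [Real.dist_eq] at this
  -- continuity
  refine ⟨g, ?_, hgD, hgtend⟩
  intro x hx
  obtain ⟨ε₀, hε₀, hIccI, L, hL0, hL⟩ := hlip x hx
  -- Lipschitz-type bound for g against the center x
  have hgLip : ∀ y ∈ I, |y - x| < ε₀ → |g y - g x| ≤ L * |y - x| := by
    intro y hyI hyx
    apply le_of_forall_pos_le_add
    intro ζ hζ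
    set η := ζ / (2 + 2*L) with hη
    have hηpos : 0 < η := by positivity
    have hρy : 0 < min η (ε₀ - |y - x|) := lt_min hηpos (by linarith)
    obtain ⟨p, hpD, hp1, hp2⟩ := happrox y hyI _ hρy
    obtain ⟨q, hqD, hq1, hq2⟩ := happrox x hx _ (lt_min hηpos hε₀)
    have hp1η : |p - y| < η := lt_of_lt_of_le hp1 (min_le_left _ _)
    have hp2η : |f p - g y| < η := lt_of_lt_of_le hp2 (min_le_left _ _)
    have hq1η : |q - x| < η := lt_of_lt_of_le hq1 (min_le_left _ _)
    have hq2η : |f q - g x| < η := lt_of_lt_of_le hq2 (min_le_left _ _)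
    have hpw : p ∈ Set.Icc (x - ε₀) (x + ε₀) := by
      have h1 : |p - x| ≤ |p - y| + |y - x| := abs_sub_le p y x
      have h2 : |p - y| < ε₀ - |y - x| := lt_of_lt_of_le hp1 (min_le_right _ _)
      have h3 : |p - x| < ε₀ := by linarith
      rw [abs_lt] at h3
      exact Set.mem_Icc.2 ⟨by linarith [h3.1], by linarith [h3.2]⟩
    have hqw : q ∈ Set.Icc (x - ε₀) (x + ε₀) := by
      have h2 : |q - x| < ε₀ := lt_of_lt_of_le hq1 (min_le_right _ _)
      rw [abs_lt] at h2
      exact ⟨by linarith [h2.1], by linarith [h2.2]⟩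
    have hfpq := hL p ⟨hpD, hpw⟩ q ⟨hqD, hqw⟩
    have hpq : |p - q| ≤ |y - x| + 2*η := by
      have h1 : |p - q| ≤ |p - y| + |y - q| := abs_sub_le p y q
      have h2 : |y - q| ≤ |y - x| + |x - q| := abs_sub_le y x q
      rw [abs_sub_comm x q] at h2
      linarith
    have h3 : |g y - g x| ≤ |g y - f p| + |f p - f q| + |f q - g x| := by
      have e1 : |g y - g x| ≤ |g y - f p| + |f p - g x| := abs_sub_le _ _ _
      have e2 : |f p - g x| ≤ |f p - f q| + |f q - g x| := abs_sub_le _ _ _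
      linarith
    rw [abs_sub_comm (g y) (f p)] at h3
    have h4 : L * |p - q| ≤ L * (|y - x| + 2*η) :=
      mul_le_mul_of_nonneg_left hpq hL0
    have hηeq : (2 + 2*L) * η = ζ := by
      rw [hη]; field_simp
    nlinarith [hfpq]
  rw [Metric.continuousWithinAt_iff]
  intro ε hε
  refine ⟨min ε₀ (ε / (2*(L+1))), lt_min hε₀ (by positivity), ?_⟩
  intro y hyI hyd
  rw [Real.dist_eq] at hyd ⊢
  have hd1 : |y - x| < ε₀ := lt_of_lt_of_le hyd (min_le_left _ _)
  have hd2 : |y - x| < ε / (2*(L+1)) := lt_of_lt_of_le hyd (min_le_right _ _)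
  have h1 := hgLip y hyI hd1
  have h2 : L * |y - x| ≤ L * (ε / (2*(L+1))) := mul_le_mul_of_nonneg_left hd2.le hL0
  have hc : (0:ℝ) < 2*(L+1) := by linarith
  have h3 : L * (ε / (2*(L+1))) < ε := by
    rw [← mul_div_assoc, div_lt_iff₀ hc]
    nlinarith
  linarith


lemma divDiff_eq_ddiff {m : ℕ} (x : Fin (m+1) → ℝ) (hx : Function.Injective x) (f : ℝ → ℝ) :
    divDiff m x f = ddiff (Finset.image x Finset.univ) f := by
  rw [ddiff, divDiff, Finset.sum_image (fun a _ b _ h => hx h)]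
  apply Finset.sum_congr rfl
  intro i _
  congr 1
  rw [← Finset.image_erase hx, Finset.prod_image]
  intro a ha b hb h
  exact hx h

lemma gconvex_of_dense {I D : Set ℝ} {f g : ℝ → ℝ} {n : ℕ}
    (hDI : D ⊆ I)
    (hnear : ∀ y ∈ I, ∀ ρ > (0:ℝ), ∃ p ∈ D, |p - y| < ρ)
    (hDD : ∀ S : Finset ℝ, ↑S ⊆ D → S.card = n + 2 → 0 ≤ ddiff S f)
    (hgD : ∀ q ∈ D, g q = f q)
    (hgcont : ContinuousOn g I)
    (x : Fin (n + 2) → ℝ) (hxinj : Function.Injective x) (hxI : ∀ i, x i ∈ I) :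
    0 ≤ divDiff (n + 1) x g := by
  classical
  -- minimal gap
  obtain ⟨c, hcpos, hgap⟩ :
      ∃ c : ℝ, 0 < c ∧ ∀ i j : Fin (n+2), i ≠ j → 3 * c ≤ |x i - x j| := by
    set G := Finset.image (fun p : Fin (n+2) × Fin (n+2) => |x p.1 - x p.2|)
      Finset.univ.offDiag with hG
    have hGne : G.Nonempty := by
      refine ⟨|x 0 - x 1|, ?_⟩
      rw [hG, Finset.mem_image]
      exact ⟨(0, 1), Finset.mem_offDiag.2
        ⟨Finset.mem_univ _, Finset.mem_univ _, by simp [Fin.ext_iff]⟩, rfl⟩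
    refine ⟨G.min' hGne / 3, ?_, ?_⟩
    · have h0 : 0 < G.min' hGne := by
        rw [Finset.lt_min'_iff]
        intro y hy
        rw [hG, Finset.mem_image] at hy
        obtain ⟨p, hp, rfl⟩ := hy
        rw [Finset.mem_offDiag] at hp
        exact abs_pos.2 (sub_ne_zero.2 (fun hc' => hp.2.2 (hxinj hc')))
      linarith
    · intro i j hij
      have hmem : |x i - x j| ∈ G := by
        rw [hG, Finset.mem_image]
        exact ⟨(i, j), Finset.mem_offDiag.2
          ⟨Finset.mem_univ _, Finset.mem_univ _, hij⟩, rfl⟩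
      have := G.min'_le _ hmem
      linarith
  -- approximating sequences
  have hq : ∀ (k : ℕ) (i : Fin (n+2)), ∃ p ∈ D, |p - x i| < min (1/((k:ℝ)+1)) c :=
    fun k i => hnear (x i) (hxI i) _ (lt_min (by positivity) hcpos)
  set q : ℕ → Fin (n+2) → ℝ := fun k i => (hq k i).choose with hqdef
  have hqD : ∀ k i, q k i ∈ D := fun k i => (hq k i).choose_spec.1
  have hqd : ∀ k i, |q k i - x i| < min (1/((k:ℝ)+1)) c := fun k i => (hq k i).choose_spec.2
  have hqc : ∀ k i, |q k i - x i| < c := fun k i => lt_of_lt_of_le (hqd k i) (min_le_right _ _)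
  have hqk : ∀ k i, |q k i - x i| < 1/((k:ℝ)+1) :=
    fun k i => lt_of_lt_of_le (hqd k i) (min_le_left _ _)
  -- injectivity of q k
  have hqinj : ∀ k, Function.Injective (q k) := by
    intro k i j hij
    by_contra hne
    have h1 := hgap i j hne
    have h2 := hqc k i
    have h3 := hqc k j
    have e1 : |x i - x j| ≤ |x i - q k i| + |q k i - x j| := abs_sub_le _ _ _
    rw [hij] at e1
    have e2 : |q k j - x j| < c := hqc k j
    have e3 : |x i - q k j| < c := by rw [← hij, abs_sub_comm]; exact hqc k i
    linarith
  -- nonnegativity at rational nodes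
  have hnn : ∀ k, 0 ≤ divDiff (n+1) (q k) g := by
    intro k
    have he : divDiff (n+1) (q k) g = divDiff (n+1) (q k) f := by
      rw [divDiff, divDiff]
      exact Finset.sum_congr rfl (fun i _ => by rw [hgD _ (hqD k i)])
    rw [he, divDiff_eq_ddiff _ (hqinj k)]
    apply hDD
    · intro t ht
      rw [Finset.coe_image] at ht
      obtain ⟨i, _, rfl⟩ := ht
      exact hqD k i
    · rw [Finset.card_image_of_injective _ (hqinj k), Finset.card_univ, Fintype.card_fin]
  -- convergence
  have htend : ∀ i, Tendsto (fun k => q k i) atTop (𝓝 (x i)) := by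
    intro i
    rw [tendsto_iff_dist_tendsto_zero]
    apply squeeze_zero (fun k => dist_nonneg)
      (fun k => le_of_lt (by rw [Real.dist_eq]; exact hqk k i))
    exact tendsto_one_div_add_atTop_nhds_zero_nat
  have hgq : ∀ i, Tendsto (fun k => g (q k i)) atTop (𝓝 (g (x i))) := by
    intro i
    have h1 : Tendsto (fun k => q k i) atTop (𝓝[I] (x i)) := by
      rw [tendsto_nhdsWithin_iff]
      exact ⟨htend i, Filter.Eventually.of_forall (fun k => hDI (hqD k i))⟩
    exact (hgcont (x i) (hxI i)).tendsto.comp h1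
  have hprod : ∀ i : Fin (n+2), Tendsto
      (fun k => ∏ j ∈ Finset.univ.erase i, (q k i - q k j)) atTop
      (𝓝 (∏ j ∈ Finset.univ.erase i, (x i - x j))) := by
    intro i
    apply tendsto_finset_prod
    intro j _
    exact (htend i).sub (htend j)
  have hprodne : ∀ i : Fin (n+2), (∏ j ∈ Finset.univ.erase i, (x i - x j)) ≠ 0 := by
    intro i
    apply Finset.prod_ne_zero_iff.2
    intro j hj
    exact sub_ne_zero.2 (fun hc' => (Finset.mem_erase.1 hj).1 (hxinj hc').symm)
  have hsum : Tendsto (fun k => divDiff (n+1) (q k) g) atTop (𝓝 (divDiff (n+1) x g)) := by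
    rw [divDiff]
    apply tendsto_finset_sum
    intro i _
    exact Tendsto.div (hgq i) (hprod i) (hprodne i)
  exact ge_of_tendsto' hsum hnn |>.trans_eq rfl


/-- An n-Jensen convex function agrees on the rationals of I with some continuous
n-convex function on I. -/
theorem jensen_convex_rational_extension (n : ℕ) (hn : 1 ≤ n) (I : Set ℝ)
    (hI : ProperOpenInterval I) (f : ℝ → ℝ) (hf : JensenConvexOrder n I f) :
    ∃ g : ℝ → ℝ, ContinuousOn g I ∧ ConvexOrder n I g ∧
      ∀ x ∈ I, IsRatR x → g x = f x := by
  obtain ⟨hIopen, hord, hInone, hIproper⟩ := hI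
  classical
  set D : Set ℝ := {y | y ∈ I ∧ IsRatR y} with hD
  have hDI : D ⊆ I := fun y hy => hy.1
  have hdense : ∀ u v : ℝ, u < v → Set.Ioo u v ⊆ I → (D ∩ Set.Ioo u v).Nonempty := by
    intro u v huv hIoo
    obtain ⟨r, hr1, hr2⟩ := exists_rat_btwn huv
    have hmem : (r : ℝ) ∈ Set.Ioo u v := ⟨hr1, hr2⟩
    exact ⟨(r : ℝ), ⟨hIoo hmem, ⟨r, rfl⟩⟩, hmem⟩
  have hMC : MCon n D f := by
    intro S hSD hSc
    refine rat_nodes_nonneg hord hf S (fun s hs => (hSD hs).1) ?_ hSc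
    intro s hs
    exact (hSD (Finset.mem_coe.2 hs)).2
  have hlip : ∀ x ∈ I, ∃ ε > 0, Set.Icc (x - ε) (x + ε) ⊆ I ∧
      ∃ L : ℝ, 0 ≤ L ∧ ∀ y ∈ D ∩ Set.Icc (x - ε) (x + ε), ∀ z ∈ D ∩ Set.Icc (x - ε) (x + ε),
        |f y - f z| ≤ L * |y - z| := by
    intro x hx
    obtain ⟨ε, hε, hIcc, L, hL⟩ := mcon_lipschitz I hIopen n hn D f hDI hdense hMC x hx
    refine ⟨ε, hε, hIcc, |L|, abs_nonneg L, ?_⟩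
    intro y hy z hz
    exact (hL y hy z hz).trans
      (mul_le_mul_of_nonneg_right (le_abs_self L) (abs_nonneg _))
  have hnear : ∀ y ∈ I, ∀ ρ > (0:ℝ), ∃ p ∈ D, |p - y| < ρ := by
    intro y hy ρ hρ
    obtain ⟨ε₀, hε₀, hIccI, _⟩ := hlip y hy
    have hδpos : 0 < min ρ ε₀ := lt_min hρ hε₀
    obtain ⟨p, hpD, hp⟩ := hdense (y - min ρ ε₀) y (by linarith)
      (fun w hw => hIccI ⟨by
          have := min_le_right ρ ε₀
          have := hw.1
          simp only [Set.mem_Ioo] at hw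
          linarith [hw.1],
        by
          simp only [Set.mem_Ioo] at hw
          linarith [hw.2, hε₀]⟩)
    rw [Set.mem_Ioo] at hp
    refine ⟨p, hpD, ?_⟩
    rw [abs_lt]
    have := min_le_left ρ ε₀
    constructor <;> linarith [hp.1, hp.2]
  obtain ⟨g, hgcont, hgD, _⟩ := extension_exists hIopen hDI hdense hlip
  refine ⟨g, hgcont, ?_, fun x hx hrat => hgD x ⟨hx, hrat⟩⟩
  intro x hxinj hxI
  exact gconvex_of_dense hDI hnear hMC hgD hgcont x hxinj hxI
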